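/- Let f: ℕ → ℝ≥0 be any function and let T be a bifurcating tree. Then 𝔠_{MDM,f}(T) = ((f(0)+f(2))/2)·C(T) and 𝔠_{sd,f}(T) = ((f(0)+f(2))/√2)·C(T). -/

import Mathlib

/-- Rooted trees encoded as a root together with the list of subtrees
rooted at its children. -/
inductive MTree : Type
  | node : List MTree → MTree

namespace MTree

/-- Number of leaves of a tree (a single node counts as one leaf). -/
def leafCount : MTree → ℕ
  | node ts => max 1 (ts.attach.map (fun x => leafCount x.1)).sum
decreasing_by
  have := List.sizeOf_lt_of_mem x.2
  simp only [node.sizeOf_spec]; omega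

/-- `deltaF f T = Σ_{v ∈ V(T)} f (deg v)`, the `f`-size of `T`. -/
noncomputable def deltaF (f : ℕ → ℝ) : MTree → ℝ
  | node ts => f ts.length + (ts.attach.map (fun x => deltaF f x.1)).sum
decreasing_by
  have := List.sizeOf_lt_of_mem x.2
  simp only [node.sizeOf_spec]; omega

/-- The Colless-like index relative to a "dissimilarity" `D` and a function `f`:
the sum, over all internal nodes `v`, of `D` applied to the list of `f`-sizes of
the subtrees rooted at the children of `v`. -/
noncomputable def cIndex (D : List ℝ → ℝ) (f : ℕ → ℝ) : MTree → ℝ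
  | node ts => (if ts.isEmpty then 0 else D (ts.map (deltaF f)))
      + (ts.attach.map (fun x => cIndex D f x.1)).sum
decreasing_by
  have := List.sizeOf_lt_of_mem x.2
  simp only [node.sizeOf_spec]; omega

/-- The Colless index of a (bifurcating) tree: the sum over the internal nodes of the
absolute value of the difference of the numbers of leaves of the two child subtrees. -/
def colless : MTree → ℕ
  | node ts =>
      (match ts with
       | [a, b] => ((a.leafCount : ℤ) - (b.leafCount : ℤ)).natAbs
       | _ => 0)
      + (ts.attach.map (fun x => colless x.1)).sum
decreasing_by
  have := List.sizeOf_lt_of_mem x.2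
  simp only [node.sizeOf_spec]; omega

/-- The quadratic Colless index of a (bifurcating) tree. -/
def collessSq : MTree → ℕ
  | node ts =>
      (match ts with
       | [a, b] => ((a.leafCount : ℤ) - (b.leafCount : ℤ)).natAbs ^ 2
       | _ => 0)
      + (ts.attach.map (fun x => collessSq x.1)).sum
decreasing_by
  have := List.sizeOf_lt_of_mem x.2
  simp only [node.sizeOf_spec]; omega

/-- A tree in the sense of the paper: no node of out-degree 1. -/
inductive WellFormed : MTree → Prop
  | node {ts : List MTree} : ts.length ≠ 1 → (∀ t ∈ ts, WellFormed t) →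
      WellFormed (node ts)

/-- A bifurcating tree: every internal node has out-degree exactly 2. -/
inductive Bifurcating : MTree → Prop
  | node {ts : List MTree} : (ts.length = 0 ∨ ts.length = 2) →
      (∀ t ∈ ts, Bifurcating t) → Bifurcating (node ts)

/-- Isomorphism of (list-encoded) trees: the lists of child subtrees match up to
a permutation and recursively isomorphic subtrees. -/
inductive Iso : MTree → MTree → Prop
  | node {ts us vs : List MTree} :
      List.Forall₂ Iso ts vs → vs.Perm us → Iso (node ts) (node us)

/-- A tree is fully symmetric when, for every internal node, the subtrees rooted at
its children are pairwise isomorphic. -/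
inductive FullySymmetric : MTree → Prop
  | node {ts : List MTree} : (∀ s ∈ ts, ∀ t ∈ ts, Iso s t) →
      (∀ t ∈ ts, FullySymmetric t) → FullySymmetric (node ts)

/-- The comb `K_n` with `n ≥ 1` leaves. -/
def comb : ℕ → MTree
  | 0 => node []
  | 1 => node []
  | n + 2 => node [node [], comb (n + 1)]

/-- The star `FS_n`, whose root has `n` children, all of them leaves. -/
def star (n : ℕ) : MTree := node (List.replicate n (node []))

/-- The median of a list of real numbers. -/
noncomputable def median (l : List ℝ) : ℝ :=
  let s := l.mergeSort (fun a b => a ≤ b)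
  if l.length % 2 = 1 then s.getD (l.length / 2) 0
  else (s.getD (l.length / 2 - 1) 0 + s.getD (l.length / 2) 0) / 2

/-- The mean deviation from the median of a list of real numbers. -/
noncomputable def MDM (l : List ℝ) : ℝ :=
  (l.map (fun x => |x - median l|)).sum / l.length

/-- The sample variance of a list of real numbers. -/
noncomputable def svar (l : List ℝ) : ℝ :=
  (l.map (fun x => (x - l.sum / l.length) ^ 2)).sum / ((l.length : ℝ) - 1)

/-- The sample standard deviation of a list of real numbers. -/
noncomputable def ssd (l : List ℝ) : ℝ := Real.sqrt (svar l)

end MTree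

namespace MTree

theorem strongInd (P : MTree → Prop) (h : ∀ ts, (∀ t ∈ ts, P t) → P (node ts)) : ∀ t, P t
  | node ts => h ts (fun t ht => strongInd P h t)
decreasing_by
  have := List.sizeOf_lt_of_mem ht
  simp only [node.sizeOf_spec]; omega

lemma median_pair' (x y : ℝ) : median [x, y] = (x + y) / 2 := by
  have h : List.mergeSort [x,y] (fun a b => a ≤ b) = if x ≤ y then [x,y] else [y,x] := by
    rw [List.mergeSort]; split <;> simp_all [List.mergeSort]
  simp only [median, h, List.length_cons, List.length_nil]
  norm_num
  split <;> simp <;> ring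

lemma MDM_pair' (x y : ℝ) : MDM [x, y] = |x - y| / 2 := by
  simp only [MDM, median_pair']
  have h1 : x - (x+y)/2 = (x-y)/2 := by ring
  have h2 : y - (x+y)/2 = -((x-y)/2) := by ring
  simp [h1, h2, abs_neg, abs_div]

lemma ssd_pair' (x y : ℝ) : ssd [x, y] = |x - y| / Real.sqrt 2 := by
  have h : svar [x,y] = (x-y)^2 / 2 := by
    simp [svar]; ring
  rw [ssd, h, Real.sqrt_div' _ (by norm_num), Real.sqrt_sq_eq_abs]

lemma attach_sum' {α : Type*} [AddCommMonoid α] (ts : List MTree) (g : MTree → α) :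
    (ts.attach.map (fun x => g x.1)).sum = (ts.map g).sum := by
  rw [List.attach_map_val]

lemma leafCount_pos' (t : MTree) : 1 ≤ t.leafCount := by
  cases t with | node ts => rw [leafCount]; omega

lemma leafCount_pair' (a b : MTree) : (node [a,b]).leafCount = a.leafCount + b.leafCount := by
  rw [leafCount]
  have ha := leafCount_pos' a
  simp [List.attach]
  omega

lemma deltaF_bif (f : ℕ → ℝ) (T : MTree) (hT : T.Bifurcating) :
    deltaF f T = (f 0 + f 2) * T.leafCount - f 2 := by
  induction T using strongInd with
  | h ts ih =>
    cases hT with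
    | node hlen hts =>
      rcases hlen with h0 | h2
      · rcases List.length_eq_zero_iff.1 h0 with rfl
        rw [deltaF, leafCount]; simp
      · obtain ⟨a, b, rfl⟩ := List.length_eq_two.1 h2
        rw [deltaF, leafCount_pair']
        have ia := ih a (by simp) (hts a (by simp))
        have ib := ih b (by simp) (hts b (by simp))
        have ha := leafCount_pos' a
        simp [List.attach, ia, ib]
        push_cast
        ring

theorem main_aux (f : ℕ → ℝ) (hf : ∀ n, 0 ≤ f n)
    (T : MTree) (hT : T.Bifurcating) :
    MTree.cIndex MTree.MDM f T = (f 0 + f 2) / 2 * T.colless ∧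
    MTree.cIndex MTree.ssd f T = (f 0 + f 2) / Real.sqrt 2 * T.colless := by
  induction T using strongInd with
  | h ts ih =>
    cases hT with
    | node hlen hts =>
      rcases hlen with h0 | h2
      · rcases List.length_eq_zero_iff.1 h0 with rfl
        rw [cIndex, cIndex, colless]
        simp
        intro a b h
        exact absurd h (by simp)
      · obtain ⟨a, b, rfl⟩ := List.length_eq_two.1 h2
        have ia := ih a (by simp) (hts a (by simp))
        have ib := ih b (by simp) (hts b (by simp))
        have da := deltaF_bif f a (hts a (by simp))
        have db := deltaF_bif f b (hts b (by simp))
        have hnn : 0 ≤ f 0 + f 2 := by have := hf 0; have := hf 2; linarith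
        have hdiff : deltaF f a - deltaF f b =
            (f 0 + f 2) * ((a.leafCount : ℝ) - b.leafCount) := by
          rw [da, db]; ring
        have habs : |deltaF f a - deltaF f b| =
            (f 0 + f 2) * (((a.leafCount : ℤ) - b.leafCount).natAbs : ℝ) := by
          rw [hdiff, abs_mul, abs_of_nonneg hnn]
          congr 1
          push_cast [Nat.cast_natAbs]
          push_cast
          rfl
        have hcol : ((node [a,b]).colless : ℝ) =
            (((a.leafCount : ℤ) - b.leafCount).natAbs : ℝ) + a.colless + b.colless := by
          rw [colless]; simp [List.attach]; push_cast; ring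
        constructor
        · rw [cIndex]
          simp only [List.attach, List.attachWith, List.map, List.pmap, List.sum_cons,
            List.sum_nil, List.isEmpty, Bool.false_eq_true, if_false]
          rw [MDM_pair', habs, ia.1, ib.1, hcol]
          ring
        · rw [cIndex]
          simp only [List.attach, List.attachWith, List.map, List.pmap, List.sum_cons,
            List.sum_nil, List.isEmpty, Bool.false_eq_true, if_false]
          rw [ssd_pair', habs, ia.2, ib.2, hcol]
          have h2 : Real.sqrt 2 ≠ 0 := by positivity
          field_simp
          ring


end MTree

/-- On bifurcating trees, the Colless-like indices `𝔠_{MDM,f}` and `𝔠_{sd,f}` are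
proportional to the Colless index, with factors `(f 0 + f 2)/2` and `(f 0 + f 2)/√2`. -/
theorem cIndex_MDM_sd_eq_colless (f : ℕ → ℝ) (hf : ∀ n, 0 ≤ f n)
    (T : MTree) (hT : T.Bifurcating) :
    MTree.cIndex MTree.MDM f T = (f 0 + f 2) / 2 * T.colless ∧
    MTree.cIndex MTree.ssd f T = (f 0 + f 2) / Real.sqrt 2 * T.colless := by
  exact MTree.main_aux f hf T hT
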